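/- For any non-degenerate Euclidean tetrahedron with edge lengths e_{ij}, Cayley–Menger determinant D > 0, and cofactors D_{ij}, the interior dihedral angle α_{ij} at edge e_{ij} satisfies cos(α_{ij}) = D_{ij}/√(2·e_{ij}²·D + D_{ij}²). -/

import Mathlib

open Real

/-- The interior dihedral angle of a tetrahedron along the edge `pq`, between the faces
`pqa` and `pqb`. -/
noncomputable def dihedralAngle (p q a b : EuclideanSpace ℝ (Fin 3)) : ℝ :=
  InnerProductGeometry.angle
    (a - p - ((inner ℝ (a - p) (q - p) : ℝ) / (inner ℝ (q - p) (q - p) : ℝ)) • (q - p))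
    (b - p - ((inner ℝ (b - p) (q - p) : ℝ) / (inner ℝ (q - p) (q - p) : ℝ)) • (q - p))

set_option maxHeartbeats 2000000 in
private theorem det_fin_four' (A : Matrix (Fin 4) (Fin 4) ℝ) :
    A.det =
      A 0 0 * (A 1 1 * A 2 2 * A 3 3 - A 1 1 * A 2 3 * A 3 2 - A 1 2 * A 2 1 * A 3 3
        + A 1 2 * A 2 3 * A 3 1 + A 1 3 * A 2 1 * A 3 2 - A 1 3 * A 2 2 * A 3 1)
      - A 0 1 * (A 1 0 * A 2 2 * A 3 3 - A 1 0 * A 2 3 * A 3 2 - A 1 2 * A 2 0 * A 3 3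
        + A 1 2 * A 2 3 * A 3 0 + A 1 3 * A 2 0 * A 3 2 - A 1 3 * A 2 2 * A 3 0)
      + A 0 2 * (A 1 0 * A 2 1 * A 3 3 - A 1 0 * A 2 3 * A 3 1 - A 1 1 * A 2 0 * A 3 3
        + A 1 1 * A 2 3 * A 3 0 + A 1 3 * A 2 0 * A 3 1 - A 1 3 * A 2 1 * A 3 0)
      - A 0 3 * (A 1 0 * A 2 1 * A 3 2 - A 1 0 * A 2 2 * A 3 1 - A 1 1 * A 2 0 * A 3 2
        + A 1 1 * A 2 2 * A 3 0 + A 1 2 * A 2 0 * A 3 1 - A 1 2 * A 2 1 * A 3 0) := by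
  rw [Matrix.det_succ_row_zero]
  simp only [Fin.sum_univ_succ, Fin.sum_univ_zero, Matrix.det_fin_three, Matrix.submatrix_apply]
  norm_num [Fin.succAbove, Fin.lt_def]
  simp only [show (Fin.succ 2 : Fin 4) = 3 from rfl,
    show Fin.castSucc (2 : Fin 3) = (2 : Fin 4) from rfl]
  ring

set_option maxHeartbeats 4000000 in
private theorem det5CM (p q r s t w : ℝ) :
    (!![(0:ℝ), p, q, r, 1;
        p, 0, s, t, 1;
        q, s, 0, w, 1;
        r, t, w, 0, 1;
        1, 1, 1, 1, 0]).det
      = 2*(p*w*s + p*w*q + p*w*r + p*w*t - p*w^2 - p*s*q + p*s*r + p*q*t - p*r*t - p^2*w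
          + w*s*r - w*s*t - w*q*r + w*q*t + s*q*r + s*q*t + s*r*t - s*r^2 - s^2*r
          + q*r*t - q*t^2 - q^2*t) := by
  rw [Matrix.det_succ_row_zero]
  simp only [Fin.sum_univ_succ, Fin.sum_univ_zero, det_fin_four', Matrix.submatrix_apply]
  simp [Matrix.vecHead, Matrix.vecTail, Fin.succAbove, Fin.lt_def, show ((0:Fin 4):ℕ) = 0 from rfl,
    show ((1:Fin 4):ℕ) = 1 from rfl, show ((2:Fin 4):ℕ) = 2 from rfl,
    show ((3:Fin 4):ℕ) = 3 from rfl, show ((0:Fin 5):ℕ) = 0 from rfl,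
    show ((1:Fin 5):ℕ) = 1 from rfl, show ((2:Fin 5):ℕ) = 2 from rfl,
    show ((3:Fin 5):ℕ) = 3 from rfl, show ((4:Fin 5):ℕ) = 4 from rfl,
    show Fin.castSucc (0:Fin 4) = (0:Fin 5) from rfl,
    show Fin.castSucc (1:Fin 4) = (1:Fin 5) from rfl,
    show Fin.castSucc (2:Fin 4) = (2:Fin 5) from rfl,
    show Fin.castSucc (3:Fin 4) = (3:Fin 5) from rfl,
    show Fin.succ (0:Fin 4) = (1:Fin 5) from rfl,
    show Fin.succ (1:Fin 4) = (2:Fin 5) from rfl,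
    show Fin.succ (2:Fin 4) = (3:Fin 5) from rfl,
    show Fin.succ (3:Fin 4) = (4:Fin 5) from rfl]
  ring

set_option maxHeartbeats 2000000 in
private theorem det4CM (p q r s t w : ℝ) :
    (!![(0:ℝ), p, q, 1;
        p, 0, s, 1;
        r, t, w, 1;
        1, 1, 1, 0]).det
      = -(p*s) - p*r + 2*p*w - p*q - p*t + p^2 - s*r + s*t + r*q - q*t := by
  rw [det_fin_four']
  simp [Matrix.vecHead, Matrix.vecTail]
  ring

private lemma inner_sub_proj {E : Type*} [NormedAddCommGroup E] [InnerProductSpace ℝ E]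
    (u a b : E) (huu : (inner ℝ u u : ℝ) ≠ 0) :
    (inner ℝ (a - ((inner ℝ a u : ℝ)/(inner ℝ u u : ℝ)) • u)
        (b - ((inner ℝ b u : ℝ)/(inner ℝ u u : ℝ)) • u) : ℝ)
      = ((inner ℝ u u : ℝ) * (inner ℝ a b : ℝ) - (inner ℝ a u : ℝ) * (inner ℝ b u : ℝ))
          / (inner ℝ u u : ℝ) := by
  simp only [inner_sub_left, inner_sub_right, real_inner_smul_left, real_inner_smul_right,
    real_inner_comm u a, real_inner_comm u b]
  field_simp
  ring

set_option maxHeartbeats 3000000 in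
/-- The dihedral angle formula via the Cayley–Menger determinant `D` and the cofactor
`D₁₂`:  `cos α₁₂ = D₁₂ / √(2·e₁₂²·D + D₁₂²)` for a non-degenerate tetrahedron. -/
theorem cos_dihedral_eq_cayleyMenger (v₁ v₂ v₃ v₄ : EuclideanSpace ℝ (Fin 3))
    (hnd : AffineIndependent ℝ ![v₁, v₂, v₃, v₄]) :
    let CM : Matrix (Fin 5) (Fin 5) ℝ :=
      !![0, dist v₁ v₂ ^ 2, dist v₁ v₃ ^ 2, dist v₁ v₄ ^ 2, 1;
         dist v₁ v₂ ^ 2, 0, dist v₂ v₃ ^ 2, dist v₂ v₄ ^ 2, 1;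
         dist v₁ v₃ ^ 2, dist v₂ v₃ ^ 2, 0, dist v₃ v₄ ^ 2, 1;
         dist v₁ v₄ ^ 2, dist v₂ v₄ ^ 2, dist v₃ v₄ ^ 2, 0, 1;
         1, 1, 1, 1, 0]
    let D : ℝ := CM.det
    let D₁₂ : ℝ := -(CM.submatrix ![0, 1, 3, 4] ![0, 1, 2, 4]).det
    Real.cos (dihedralAngle v₁ v₂ v₃ v₄) =
      D₁₂ / Real.sqrt (2 * dist v₁ v₂ ^ 2 * D + D₁₂ ^ 2) := by
  intro CM D D₁₂
  have hinj := hnd.injective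
  set u : EuclideanSpace ℝ (Fin 3) := v₂ - v₁ with hu
  set a : EuclideanSpace ℝ (Fin 3) := v₃ - v₁ with ha
  set b : EuclideanSpace ℝ (Fin 3) := v₄ - v₁ with hb
  have hune : u ≠ 0 := by
    rw [hu, sub_ne_zero]
    intro h
    have : (1 : Fin 4) = 0 := hinj (by simpa using h)
    exact absurd this (by decide)
  set uu : ℝ := (inner ℝ u u : ℝ) with huu_def
  set aa : ℝ := (inner ℝ a a : ℝ) with haa_def
  set bb : ℝ := (inner ℝ b b : ℝ) with hbb_def
  set ua : ℝ := (inner ℝ a u : ℝ) with hua_def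
  set ub : ℝ := (inner ℝ b u : ℝ) with hub_def
  set ab : ℝ := (inner ℝ a b : ℝ) with hab_def
  have huu : (0:ℝ) < uu := by
    rw [huu_def]
    exact lt_of_le_of_ne real_inner_self_nonneg
      (Ne.symm fun h => hune (inner_self_eq_zero.mp h))
  have h12 : dist v₁ v₂ ^ 2 = uu := by
    rw [dist_comm, dist_eq_norm, huu_def, real_inner_self_eq_norm_sq]
  have h13 : dist v₁ v₃ ^ 2 = aa := by
    rw [dist_comm, dist_eq_norm, haa_def, real_inner_self_eq_norm_sq]
  have h14 : dist v₁ v₄ ^ 2 = bb := by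
    rw [dist_comm, dist_eq_norm, hbb_def, real_inner_self_eq_norm_sq]
  have h23 : dist v₂ v₃ ^ 2 = uu - 2*ua + aa := by
    rw [dist_eq_norm, show v₂ - v₃ = u - a from (sub_sub_sub_cancel_right _ _ _).symm,
      norm_sub_sq_real, huu_def, haa_def, hua_def, real_inner_self_eq_norm_sq,
      real_inner_self_eq_norm_sq, real_inner_comm a u]
  have h24 : dist v₂ v₄ ^ 2 = uu - 2*ub + bb := by
    rw [dist_eq_norm, show v₂ - v₄ = u - b from (sub_sub_sub_cancel_right _ _ _).symm,
      norm_sub_sq_real, huu_def, hbb_def, hub_def, real_inner_self_eq_norm_sq,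
      real_inner_self_eq_norm_sq, real_inner_comm b u]
  have h34 : dist v₃ v₄ ^ 2 = aa - 2*ab + bb := by
    rw [dist_eq_norm, show v₃ - v₄ = a - b from (sub_sub_sub_cancel_right _ _ _).symm,
      norm_sub_sq_real, haa_def, hbb_def, hab_def, real_inner_self_eq_norm_sq,
      real_inner_self_eq_norm_sq]
  have hD : D = 8*(uu*aa*bb - aa*ub^2 - bb*ua^2 - uu*ab^2 + 2*ab*ua*ub) := by
    simp only [D, CM, h12, h13, h14, h23, h24, h34]
    rw [det5CM]
    ring
  have hD12 : D₁₂ = 4*(uu*ab - ua*ub) := by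
    simp only [D₁₂, CM, h12, h13, h14, h23, h24, h34]
    have hsub : (!![(0:ℝ), uu, aa, bb, 1;
        uu, 0, uu - 2*ua + aa, uu - 2*ub + bb, 1;
        aa, uu - 2*ua + aa, 0, aa - 2*ab + bb, 1;
        bb, uu - 2*ub + bb, aa - 2*ab + bb, 0, 1;
        1, 1, 1, 1, 0]).submatrix ![0, 1, 3, 4] ![0, 1, 2, 4]
        = !![(0:ℝ), uu, aa, 1;
             uu, 0, uu - 2*ua + aa, 1;
             bb, uu - 2*ub + bb, aa - 2*ab + bb, 1;
             1, 1, 1, 0] := by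
      ext i j
      fin_cases i <;> fin_cases j <;> rfl
    rw [hsub, det4CM]
    ring
  rw [dihedralAngle, InnerProductGeometry.cos_angle, hD12, h12, hD]
  have hCS := real_inner_mul_inner_self_le a u
  have hCSb := real_inner_mul_inner_self_le b u
  have hGa : (0:ℝ) ≤ uu*aa - ua^2 := by
    rw [hua_def, huu_def, haa_def]; nlinarith [real_inner_mul_inner_self_le a u]
  have hGb : (0:ℝ) ≤ uu*bb - ub^2 := by
    rw [hub_def, huu_def, hbb_def]; nlinarith [real_inner_mul_inner_self_le b u]
  have hxy : (inner ℝ (a - (ua/uu) • u) (b - (ub/uu) • u) : ℝ) = (uu*ab - ua*ub)/uu :=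
    inner_sub_proj u a b huu.ne'
  have hx : ‖a - (ua/uu) • u‖ = Real.sqrt ((uu*aa - ua^2)/uu) := by
    rw [norm_eq_sqrt_real_inner, inner_sub_proj u a a huu.ne']
    congr 1
    ring
  have hy : ‖b - (ub/uu) • u‖ = Real.sqrt ((uu*bb - ub^2)/uu) := by
    rw [norm_eq_sqrt_real_inner, inner_sub_proj u b b huu.ne']
    congr 1
    ring
  rw [hxy, hx, hy]
  have hid : 2 * uu * (8*(uu*aa*bb - aa*ub^2 - bb*ua^2 - uu*ab^2 + 2*ab*ua*ub))
      + (4*(uu*ab - ua*ub))^2 = 16*((uu*aa - ua^2)*(uu*bb - ub^2)) := by ring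
  rw [hid]
  have h16 : Real.sqrt (16*((uu*aa - ua^2)*(uu*bb - ub^2)))
      = 4 * (Real.sqrt (uu*aa - ua^2) * Real.sqrt (uu*bb - ub^2)) := by
    rw [Real.sqrt_mul (by norm_num : (0:ℝ) ≤ 16), Real.sqrt_mul hGa,
      show (16:ℝ) = 4^2 by norm_num, Real.sqrt_sq (by norm_num : (0:ℝ) ≤ 4)]
  rw [h16, Real.sqrt_div hGa, Real.sqrt_div hGb]
  set Sa := Real.sqrt (uu*aa - ua^2)
  set Sb := Real.sqrt (uu*bb - ub^2)
  set P := uu*ab - ua*ub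
  have hsu : Real.sqrt uu * Real.sqrt uu = uu := Real.mul_self_sqrt huu.le
  rw [div_mul_div_comm, hsu]
  rw [mul_div_mul_left _ _ (by norm_num : (4:ℝ) ≠ 0)]
  rcases eq_or_ne (Sa * Sb) 0 with h0 | h0
  · rw [h0]
    simp
  · rw [div_div_div_cancel_right₀]
    exact huu.ne'
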